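/- Let M be a 3-connected matroid and let C = {e, f, g, h} be a 4-element circuit of M such that {g, h} is contained in a triad of M. If e is not contained in any triad of M and M/f is 3-connected, then M\e is 3-connected. -/

import Mathlib

open Matroid Set

namespace DetPairs

variable {α : Type*}

/-- The rank of a set in a matroid: the maximum size of an independent subset
(as an integer, for convenient arithmetic). -/
noncomputable def r (M : Matroid α) (X : Set α) : ℤ :=
  ((sSup (Set.ncard '' {I | M.Indep I ∧ I ⊆ X}) : ℕ) : ℤ)

/-- The connectivity function `λ_M(X) = r(X) + r(E − X) − r(M)`. -/
noncomputable def lam (M : Matroid α) (X : Set α) : ℤ :=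
  r M X + r M (M.E \ X) - r M M.E

/-- Local connectivity `⊓(X,Y) = r(X) + r(Y) − r(X ∪ Y)`. -/
noncomputable def localConn (M : Matroid α) (X Y : Set α) : ℤ :=
  r M X + r M Y - r M (X ∪ Y)

/-- A circuit: a minimal dependent set. -/
def Circuit (M : Matroid α) (C : Set α) : Prop :=
  C ⊆ M.E ∧ ¬ M.Indep C ∧ ∀ D, D ⊂ C → M.Indep D

/-- A cocircuit: a circuit of the dual. -/
def Cocircuit (M : Matroid α) (C : Set α) : Prop := Circuit M✶ C

/-- A triangle: a 3-element circuit. -/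
def Triangle (M : Matroid α) (T : Set α) : Prop := Circuit M T ∧ T.ncard = 3

/-- A triad: a 3-element cocircuit. -/
def Triad (M : Matroid α) (T : Set α) : Prop := Cocircuit M T ∧ T.ncard = 3

/-- A quad: a 4-element set that is both a circuit and a cocircuit. -/
def Quad (M : Matroid α) (Q : Set α) : Prop :=
  Circuit M Q ∧ Cocircuit M Q ∧ Q.ncard = 4

/-- Deletion of a set of elements. -/
def Del (M : Matroid α) (D : Set α) : Matroid α := M ↾ (M.E \ D)

/-- Contraction of a set of elements. -/
def Con (M : Matroid α) (C : Set α) : Matroid α := (M✶ ↾ (M.E \ C))✶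

/-- `M` is 3-connected: it has no `k`-separation for `k = 1, 2`, where a
`k`-separation is a set `X` with `λ(X) = k − 1`, `|X| ≥ k` and `|E − X| ≥ k`. -/
def ThreeConnected (M : Matroid α) : Prop :=
  ∀ k : ℕ, 0 < k → k < 3 → ∀ X ⊆ M.E,
    ¬ (lam M X = (k : ℤ) - 1 ∧ (k : ℤ) ≤ X.ncard ∧ (k : ℤ) ≤ (M.E \ X).ncard)

/-- A detachable pair: distinct elements `e, f` such that `M \ e \ f` or
`M / e / f` is 3-connected. -/
def DetachablePair (M : Matroid α) (e f : α) : Prop :=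
  e ≠ f ∧ e ∈ M.E ∧ f ∈ M.E ∧
    (ThreeConnected (Del M {e, f}) ∨ ThreeConnected (Con M {e, f}))

/-- The triple of elements with indices `i, i+1, i+2` in an ordering. -/
def tri (e : ℕ → α) (i : ℕ) : Set α := {e i, e (i + 1), e (i + 2)}

/-- `(e 0, …, e (n-1))` is a fan ordering of length `n ≥ 3` in `M`:
consecutive triples alternate between triangles and triads. -/
def FanOrd (M : Matroid α) (n : ℕ) (e : ℕ → α) : Prop :=
  3 ≤ n ∧ Set.InjOn e (Set.Iio n) ∧ (∀ i < n, e i ∈ M.E) ∧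
    (Triangle M (tri e 0) ∨ Triad M (tri e 0)) ∧
    ∀ i, i + 3 < n →
      (Triangle M (tri e i) → Triad M (tri e (i + 1))) ∧
      (Triad M (tri e i) → Triangle M (tri e (i + 1)))

/-- A fan (as a set): either a 2-element subset of the ground set, or the
underlying set of a fan ordering of length at least 3. -/
def IsFan (M : Matroid α) (F : Set α) : Prop :=
  (F ⊆ M.E ∧ F.ncard = 2) ∨ ∃ n e, FanOrd M n e ∧ F = e '' Set.Iio n

/-- A maximal fan: a fan contained in no strictly larger fan. -/
def MaximalFan (M : Matroid α) (F : Set α) : Prop :=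
  IsFan M F ∧ ∀ F', IsFan M F' → F ⊆ F' → F' = F

/-- `M` is a wheel or a whirl: its ground set has a cyclic ordering of even size
`2n` in which consecutive triples alternate between triangles and triads. -/
def IsWheelOrWhirl (M : Matroid α) : Prop :=
  ∃ (n : ℕ) (e : ℕ → α), 2 ≤ n ∧ Set.InjOn e (Set.Iio (2 * n)) ∧
    M.E = e '' Set.Iio (2 * n) ∧
    ∀ i < 2 * n,
      (i % 2 = 0 → Triangle M {e i, e ((i + 1) % (2 * n)), e ((i + 2) % (2 * n))}) ∧
      (i % 2 = 1 → Triad M {e i, e ((i + 1) % (2 * n)), e ((i + 2) % (2 * n))})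

/-- An `M(K₄)`-separator: a 6-element set `{a,b,c,x,y,z}` where `{x,y,z}` is a
triad and `{a,b,c}`, `{a,x,y}`, `{b,x,z}`, `{c,y,z}` are triangles. -/
def MK4Sep (M : Matroid α) (S : Set α) : Prop :=
  ∃ a b c x y z : α, S = {a, b, c, x, y, z} ∧ S.ncard = 6 ∧
    Triad M {x, y, z} ∧ Triangle M {a, b, c} ∧ Triangle M {a, x, y} ∧
    Triangle M {b, x, z} ∧ Triangle M {c, y, z}

/-- A vertical 3-separation `(X, {e}, Y)` of `M`. -/
def VertThreeSep (M : Matroid α) (X : Set α) (e : α) (Y : Set α) : Prop :=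
  X ∪ {e} ∪ Y = M.E ∧ Disjoint X Y ∧ e ∉ X ∧ e ∉ Y ∧
    lam M X = 2 ∧ lam M Y = 2 ∧ e ∈ M.closure X ∧ e ∈ M.closure Y ∧
    3 ≤ r M X ∧ 3 ≤ r M Y

/-- `N` is a simplification of `M`: a restriction of `M` to a set of
representatives, one from each parallel class of nonloops. -/
def SimplificationOf (M N : Matroid α) : Prop :=
  ∃ X : Set α, (∀ x ∈ X, x ∈ M.E ∧ x ∉ M.closure ∅) ∧ N = M ↾ X ∧
    ∀ y ∈ M.E, y ∉ M.closure ∅ →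
      ∃! x, x ∈ X ∧ M.closure {y} = M.closure {x}

variable {M : Matroid α} {X Y I J : Set α} {x e : α}

lemma r_nonneg (M : Matroid α) (X : Set α) : 0 ≤ r M X := Int.natCast_nonneg _

lemma r_eq_of_basis' (hE : M.E.Finite) (hI : M.IsBasis' I X) : r M X = I.ncard := by
  have hfin : ∀ J, M.Indep J → J.Finite := fun J hJ => hE.subset hJ.subset_ground
  have hub : ∀ n ∈ Set.ncard '' {J | M.Indep J ∧ J ⊆ X}, n ≤ I.ncard := by
    rintro n ⟨J, ⟨hJi, hJX⟩, rfl⟩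
    obtain ⟨K, hK, hJK⟩ := hJi.subset_isBasis'_of_subset hJX
    have hcard := hK.encard_eq_encard hI
    calc J.ncard ≤ K.ncard := ncard_le_ncard hJK (hfin K hK.indep)
      _ = I.ncard := by rw [ncard_def, hcard, ← ncard_def]
  have hmem : I.ncard ∈ Set.ncard '' {J | M.Indep J ∧ J ⊆ X} :=
    ⟨I, ⟨hI.indep, hI.subset⟩, rfl⟩
  unfold r
  norm_cast
  exact le_antisymm (csSup_le ⟨_, hmem⟩ hub) (le_csSup ⟨I.ncard, hub⟩ hmem)

lemma r_indep (hE : M.E.Finite) (hI : M.Indep I) : r M I = I.ncard :=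
  r_eq_of_basis' hE hI.isBasis_self.isBasis'

lemma r_mono (hE : M.E.Finite) (hXY : X ⊆ Y) : r M X ≤ r M Y := by
  obtain ⟨I, hI⟩ := M.exists_isBasis' X
  obtain ⟨J, hJ, hIJ⟩ := hI.indep.subset_isBasis'_of_subset (hI.subset.trans hXY)
  rw [r_eq_of_basis' hE hI, r_eq_of_basis' hE hJ]
  exact_mod_cast ncard_le_ncard hIJ (hE.subset hJ.indep.subset_ground)

lemma r_le_ncard (hE : M.E.Finite) (hX : X ⊆ M.E) : r M X ≤ X.ncard := by
  obtain ⟨I, hI⟩ := M.exists_isBasis' X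
  rw [r_eq_of_basis' hE hI]
  exact_mod_cast ncard_le_ncard hI.subset (hE.subset hX)

lemma indep_of_r_eq_ncard (hE : M.E.Finite) (hX : X ⊆ M.E) (h : r M X = X.ncard) :
    M.Indep X := by
  obtain ⟨I, hI⟩ := M.exists_isBasis' X
  rw [r_eq_of_basis' hE hI] at h
  have hXfin : X.Finite := hE.subset hX
  have : I = X := eq_of_subset_of_ncard_le hI.subset (by exact_mod_cast h.ge) hXfin
  exact this ▸ hI.indep

lemma r_eq_of_subset_closure (hE : M.E.Finite) (hXY : X ⊆ Y) (hY : Y ⊆ M.closure X) :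
    r M Y = r M X := by
  obtain ⟨I, hI⟩ := M.exists_isBasis' X
  have hIY : M.IsBasis I Y := by
    refine hI.indep.isBasis_of_subset_of_subset_closure (hI.subset.trans hXY) ?_
    rwa [hI.closure_eq_closure]
  rw [r_eq_of_basis' hE hIY.isBasis', r_eq_of_basis' hE hI]

lemma r_insert_of_mem_closure (hE : M.E.Finite) (hX : X ⊆ M.E) (h : x ∈ M.closure X) :
    r M (insert x X) = r M X := by
  refine r_eq_of_subset_closure hE (subset_insert _ _) (insert_subset h (M.subset_closure X hX))

lemma r_insert_le (hE : M.E.Finite) (x : α) (X : Set α) :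
    r M (insert x X) ≤ r M X + 1 := by
  obtain ⟨J, hJ⟩ := M.exists_isBasis' (insert x X)
  rw [r_eq_of_basis' hE hJ]
  have hJfin : J.Finite := hE.subset hJ.indep.subset_ground
  have h1 : r M X ≥ (J \ {x}).ncard := by
    obtain ⟨K, hK, hsub⟩ := (hJ.indep.subset diff_subset).subset_isBasis'_of_subset
      (by rw [diff_subset_iff, ← insert_eq]; exact hJ.subset)
    rw [r_eq_of_basis' hE hK]
    exact_mod_cast ncard_le_ncard hsub (hE.subset hK.indep.subset_ground)
  have h2 : (J : Set α).ncard ≤ (J \ {x}).ncard + 1 := by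
    rcases em (x ∈ J) with hx | hx
    · rw [ncard_diff_singleton_add_one hx hJfin]
    · rw [diff_singleton_eq_self hx]; omega
  omega

lemma r_insert_of_not_mem_closure (hE : M.E.Finite) (hX : X ⊆ M.E) (hx : x ∈ M.E)
    (h : x ∉ M.closure X) : r M (insert x X) = r M X + 1 := by
  obtain ⟨I, hI⟩ := M.exists_isBasis' X
  have hxI : x ∉ M.closure I := by rwa [hI.closure_eq_closure]
  have hind : M.Indep (insert x I) := ((hI.indep.notMem_closure_iff hx).mp hxI).1
  have hxnotI : x ∉ I := fun hmem => hxI (M.mem_closure_of_mem hmem hI.indep.subset_ground)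
  have hbasis : M.IsBasis (insert x I) (insert x X) := by
    refine hind.isBasis_of_subset_of_subset_closure (insert_subset_insert hI.subset) ?_
    refine insert_subset (M.mem_closure_of_mem (mem_insert _ _) hind.subset_ground) ?_
    calc X ⊆ M.closure X := M.subset_closure X hX
      _ = M.closure I := hI.closure_eq_closure.symm
      _ ⊆ M.closure (insert x I) := M.closure_subset_closure (subset_insert _ _)
  rw [r_eq_of_basis' hE hbasis.isBasis', r_eq_of_basis' hE hI,
    ncard_insert_of_notMem hxnotI (hE.subset hI.indep.subset_ground)]
  push_cast; ring

lemma not_mem_closure_of_r (hE : M.E.Finite) (hX : X ⊆ M.E)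
    (h : r M X < r M (insert x X)) : x ∉ M.closure X := by
  intro hmem
  rw [r_insert_of_mem_closure hE hX hmem] at h
  omega

lemma r_submod (hE : M.E.Finite) (hX : X ⊆ M.E) (hY : Y ⊆ M.E) :
    r M (X ∪ Y) + r M (X ∩ Y) ≤ r M X + r M Y := by
  obtain ⟨I₀, hI₀⟩ := M.exists_isBasis (X ∩ Y) (inter_subset_left.trans hX)
  obtain ⟨J, hJ, hI₀J⟩ := hI₀.indep.subset_isBasis_of_subset
    (hI₀.subset.trans (inter_subset_right.trans subset_union_right))
    (union_subset hX hY)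
  have hJfin : J.Finite := hE.subset hJ.indep.subset_ground
  have hinter : J ∩ (X ∩ Y) = I₀ :=
    (hI₀.eq_of_subset_indep (hJ.indep.inter_right _)
      (subset_inter hI₀J hI₀.subset) inter_subset_right).symm
  have hrU : r M (X ∪ Y) = (J.ncard : ℤ) := r_eq_of_basis' hE hJ.isBasis'
  have hrI : r M (X ∩ Y) = (I₀.ncard : ℤ) := r_eq_of_basis' hE hI₀.isBasis'
  have hrX : ((J ∩ X).ncard : ℤ) ≤ r M X := by
    rw [← r_indep hE (hJ.indep.inter_right X)]
    exact r_mono hE inter_subset_right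
  have hrY : ((J ∩ Y).ncard : ℤ) ≤ r M Y := by
    rw [← r_indep hE (hJ.indep.inter_right Y)]
    exact r_mono hE inter_subset_right
  have hcount : (J ∩ X).ncard + (J ∩ Y).ncard = J.ncard + I₀.ncard := by
    have h1 : (J ∩ X) ∪ (J ∩ Y) = J := by rw [← inter_union_distrib_left,
      inter_eq_left.mpr hJ.subset]
    have h2 : (J ∩ X) ∩ (J ∩ Y) = I₀ := by rw [← hinter]; ext z; simp; tauto
    calc (J ∩ X).ncard + (J ∩ Y).ncard
        = ((J ∩ X) ∪ (J ∩ Y)).ncard + ((J ∩ X) ∩ (J ∩ Y)).ncard :=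
          (ncard_union_add_ncard_inter _ _ (hJfin.subset inter_subset_left)
            (hJfin.subset inter_subset_left)).symm
      _ = J.ncard + I₀.ncard := by rw [h1, h2]
  have := hcount
  omega

lemma r_union_le (hE : M.E.Finite) (hX : X ⊆ M.E) (hY : Y ⊆ M.E) :
    r M (X ∪ Y) ≤ r M X + r M Y := by
  have := r_submod hE hX hY
  have := r_nonneg M (X ∩ Y)
  omega

lemma lam_nonneg (hE : M.E.Finite) (hX : X ⊆ M.E) : 0 ≤ lam M X := by
  have h1 : r M M.E ≤ r M X + r M (M.E \ X) := by
    have := r_union_le hE hX (diff_subset (s := M.E) (t := X))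
    rwa [union_diff_cancel hX] at this
  unfold lam; omega

lemma r_dual (hE : M.E.Finite) (hX : X ⊆ M.E) :
    r M✶ X = (X.ncard : ℤ) + r M (M.E \ X) - r M M.E := by
  have hE' : M✶.E.Finite := by rwa [dual_ground]
  have hXfin : X.Finite := hE.subset hX
  -- lower bound
  obtain ⟨J, hJ⟩ := M.exists_isBasis (M.E \ X) diff_subset
  obtain ⟨B, hB, hJB⟩ := hJ.indep.exists_isBase_superset
  have hBfin : B.Finite := hE.subset hB.subset_ground
  have hBdiff : B ∩ (M.E \ X) = J :=
    (hJ.eq_of_subset_indep (hB.indep.inter_right _)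
      (subset_inter hJB hJ.subset) inter_subset_right).symm
  have hBX : B \ X = J := by
    rw [← hBdiff]; ext z
    simp only [mem_diff, mem_inter_iff]
    exact ⟨fun ⟨h1, h2⟩ => ⟨h1, hB.subset_ground h1, h2⟩, fun ⟨h1, _, h2⟩ => ⟨h1, h2⟩⟩
  have hrE : r M M.E = (B.ncard : ℤ) := r_eq_of_basis' hE hB.isBasis_ground.isBasis'
  have hrD : r M (M.E \ X) = (J.ncard : ℤ) := r_eq_of_basis' hE hJ.isBasis'
  have hdualI : M✶.Indep (X \ B) :=
    (dual_indep_iff_exists (diff_subset.trans hX)).mpr ⟨B, hB, disjoint_sdiff_left⟩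
  have hlow : ((X \ B).ncard : ℤ) ≤ r M✶ X := by
    rw [← r_indep hE' hdualI]
    exact r_mono hE' diff_subset
  have hXB : (X ∩ B).ncard + (X \ B).ncard = X.ncard :=
    ncard_inter_add_ncard_diff_eq_ncard X B hXfin
  have hBX2 : (B ∩ X).ncard + (B \ X).ncard = B.ncard :=
    ncard_inter_add_ncard_diff_eq_ncard B X hBfin
  have hcomm : (X ∩ B).ncard = (B ∩ X).ncard := by rw [inter_comm]
  -- upper bound
  obtain ⟨I, hI⟩ := M✶.exists_isBasis' X
  have hup : r M✶ X = (I.ncard : ℤ) := r_eq_of_basis' hE' hI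
  have hIE : I ⊆ M.E := by
    have := hI.indep.subset_ground; rwa [dual_ground] at this
  obtain ⟨B₂, hB₂, hdisj⟩ := (dual_indep_iff_exists hIE).mp hI.indep
  have hB₂fin : B₂.Finite := hE.subset hB₂.subset_ground
  have hIXB : I ⊆ X \ B₂ := subset_diff.mpr ⟨hI.subset, hdisj⟩
  have hIcard : I.ncard ≤ (X \ B₂).ncard := ncard_le_ncard hIXB hXfin.diff
  have hrE2 : r M M.E = (B₂.ncard : ℤ) := r_eq_of_basis' hE hB₂.isBasis_ground.isBasis'
  have hB₂X : ((B₂ \ X).ncard : ℤ) ≤ r M (M.E \ X) := by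
    rw [← r_indep hE (hB₂.indep.subset diff_subset)]
    exact r_mono hE (diff_subset_diff_left hB₂.subset_ground)
  have hXB2 : (X ∩ B₂).ncard + (X \ B₂).ncard = X.ncard :=
    ncard_inter_add_ncard_diff_eq_ncard X B₂ hXfin
  have hBX3 : (B₂ ∩ X).ncard + (B₂ \ X).ncard = B₂.ncard :=
    ncard_inter_add_ncard_diff_eq_ncard B₂ X hB₂fin
  have hcomm2 : (X ∩ B₂).ncard = (B₂ ∩ X).ncard := by rw [inter_comm]
  have hJcard : (B \ X).ncard = J.ncard := by rw [hBX]
  omega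

lemma r_restrict {R : Set α} (hXR : X ⊆ R) : r (M ↾ R) X = r M X := by
  unfold r
  congr 2
  ext n
  constructor
  · rintro ⟨I, ⟨hI, hIX⟩, rfl⟩
    exact ⟨I, ⟨(restrict_indep_iff.mp hI).1, hIX⟩, rfl⟩
  · rintro ⟨I, ⟨hI, hIX⟩, rfl⟩
    exact ⟨I, ⟨restrict_indep_iff.mpr ⟨hI, hIX.trans hXR⟩, hIX⟩, rfl⟩

variable {C D T Z : Set α} {f : α}

@[simp] lemma con_ground (M : Matroid α) (C : Set α) : (Con M C).E = M.E \ C := rfl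

@[simp] lemma del_ground (M : Matroid α) (D : Set α) : (Del M D).E = M.E \ D := rfl

lemma r_con (hE : M.E.Finite) (hf : f ∈ M.E) (hX : X ⊆ M.E \ {f}) :
    r (Con M {f}) X = r M (insert f X) - r M {f} := by
  have hE' : (M✶ ↾ (M.E \ {f})).E.Finite := by
    simpa using hE.diff (t := {f})
  have hXE : X ⊆ M.E := hX.trans diff_subset
  have hground : (M✶ ↾ (M.E \ {f})).E = M.E \ {f} := rfl
  have h1 : r (Con M {f}) X =
      (X.ncard : ℤ) + r (M✶ ↾ (M.E \ {f})) ((M.E \ {f}) \ X)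
        - r (M✶ ↾ (M.E \ {f})) (M.E \ {f}) := by
    have := r_dual (M := M✶ ↾ (M.E \ {f})) hE' (X := X) (by rw [hground]; exact hX)
    rw [hground] at this
    exact this
  rw [r_restrict diff_subset, r_restrict rfl.subset] at h1
  have h2 : r M✶ ((M.E \ {f}) \ X) =
      (((M.E \ {f}) \ X).ncard : ℤ) + r M (insert f X) - r M M.E := by
    have hid : M.E \ ((M.E \ {f}) \ X) = insert f X := by
      ext z
      simp only [mem_diff, mem_insert_iff, mem_singleton_iff]
      constructor
      · rintro ⟨hz, h⟩
        by_cases hzf : z = f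
        · exact Or.inl hzf
        · right
          by_contra hzX
          exact h ⟨⟨hz, hzf⟩, hzX⟩
      · rintro (rfl | hzX)
        · exact ⟨hf, fun h => h.1.2 rfl⟩
        · exact ⟨hXE hzX, fun h => h.2 hzX⟩
    have := r_dual (M := M) hE (X := (M.E \ {f}) \ X) (diff_subset.trans diff_subset)
    rwa [hid] at this
  have h3 : r M✶ (M.E \ {f}) =
      ((M.E \ {f}).ncard : ℤ) + r M {f} - r M M.E := by
    have := r_dual (M := M) hE (X := M.E \ {f}) diff_subset
    rwa [diff_diff_cancel_left (singleton_subset_iff.mpr hf)] at this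
  have hcount : ((M.E \ {f}) \ X).ncard + X.ncard = (M.E \ {f}).ncard :=
    ncard_diff_add_ncard_of_subset hX (hE.diff (t := {f}))
  rw [h1, h2, h3]
  omega

lemma circuit_nonempty (hC : Circuit M C) : C.Nonempty := by
  rcases C.eq_empty_or_nonempty with rfl | h
  · exact absurd M.empty_indep hC.2.1
  · exact h

lemma Circuit.mem_closure_diff (hC : Circuit M C) (hx : x ∈ C) :
    x ∈ M.closure (C \ {x}) := by
  have hind : M.Indep (C \ {x}) := hC.2.2 _ (sdiff_singleton_ssubset.mpr hx)
  rw [hind.mem_closure_iff]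
  left
  rw [insert_diff_singleton, insert_eq_of_mem hx]
  exact ⟨hC.2.1, hC.1⟩

lemma r_circuit (hE : M.E.Finite) (hC : Circuit M C) : r M C = (C.ncard : ℤ) - 1 := by
  obtain ⟨x, hx⟩ := circuit_nonempty hC
  have hCE := hC.1
  have hCfin : C.Finite := hE.subset hCE
  have h1 : r M C = r M (C \ {x}) := by
    refine r_eq_of_subset_closure hE diff_subset ?_
    intro z hz
    by_cases hzx : z = x
    · subst hzx; exact hC.mem_closure_diff hx
    · exact M.mem_closure_of_mem ⟨hz, hzx⟩ (diff_subset.trans hCE)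
  have hind : M.Indep (C \ {x}) := hC.2.2 _ (sdiff_singleton_ssubset.mpr hx)
  rw [h1, r_indep hE hind, ncard_diff_singleton_of_mem hx]
  have hpos : 0 < C.ncard := (ncard_pos hCfin).mpr ⟨x, hx⟩
  omega

lemma exists_circuit_of_dep_aux (hE : M.E.Finite) :
    ∀ n (X : Set α), X.ncard ≤ n → X ⊆ M.E → ¬ M.Indep X → ∃ C, C ⊆ X ∧ Circuit M C := by
  intro n
  induction n with
  | zero =>
    intro X hcard hXE hdep
    have : X = ∅ := ncard_eq_zero (hE.subset hXE) |>.mp (by omega)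
    exact absurd (this ▸ M.empty_indep) hdep
  | succ n ih =>
    intro X hcard hXE hdep
    by_cases hmin : ∀ D, D ⊂ X → M.Indep D
    · exact ⟨X, rfl.subset, hXE, hdep, hmin⟩
    · push_neg at hmin
      obtain ⟨D, hDX, hDdep⟩ := hmin
      have : D.ncard ≤ n := by
        have := ncard_lt_ncard hDX (hE.subset hXE)
        omega
      obtain ⟨C, hCD, hC⟩ := ih D this (hDX.subset.trans hXE) hDdep
      exact ⟨C, hCD.trans hDX.subset, hC⟩

lemma exists_circuit_of_dep (hE : M.E.Finite) (hX : X ⊆ M.E) (hdep : ¬ M.Indep X) :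
    ∃ C, C ⊆ X ∧ Circuit M C :=
  exists_circuit_of_dep_aux hE X.ncard X le_rfl hX hdep

lemma cocircuit_compl_r (hE : M.E.Finite) (hD : Cocircuit M D) :
    r M (M.E \ D) = r M M.E - 1 := by
  have hE' : M✶.E.Finite := by rwa [dual_ground]
  have hDE : D ⊆ M.E := hD.1
  have h1 : r M✶ D = (D.ncard : ℤ) - 1 := r_circuit hE' hD
  have h2 := r_dual (M := M) hE hDE
  omega

lemma cocircuit_not_mem_closure_compl (hE : M.E.Finite) (hD : Cocircuit M D)
    (hx : x ∈ D) : x ∉ M.closure (M.E \ D) := by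
  have hE' : M✶.E.Finite := by rwa [dual_ground]
  have hDE : D ⊆ M.E := hD.1
  have hDfin : D.Finite := hE.subset hDE
  have hind : M✶.Indep (D \ {x}) := hD.2.2 _ (sdiff_singleton_ssubset.mpr hx)
  have h1 : r M✶ (D \ {x}) = ((D \ {x}).ncard : ℤ) := r_indep hE' hind
  have h2 := r_dual (M := M) hE (X := D \ {x}) (diff_subset.trans hDE)
  have hid : M.E \ (D \ {x}) = insert x (M.E \ D) := by
    ext z
    simp only [mem_diff, mem_insert_iff, mem_singleton_iff]
    constructor
    · rintro ⟨hz, h⟩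
      by_cases hzx : z = x
      · exact Or.inl hzx
      · right; exact ⟨hz, fun hzD => h ⟨hzD, hzx⟩⟩
    · rintro (rfl | ⟨hz, hzD⟩)
      · exact ⟨hDE hx, fun h => h.2 rfl⟩
      · exact ⟨hz, fun h => hzD h.1⟩
  rw [hid] at h2
  have h3 : r M (insert x (M.E \ D)) = r M M.E := by omega
  intro hmem
  have h4 : r M (insert x (M.E \ D)) = r M (M.E \ D) :=
    r_insert_of_mem_closure hE diff_subset hmem
  have h5 : r M (M.E \ D) = r M M.E - 1 := cocircuit_compl_r hE hD
  omega

lemma orthogonality (hE : M.E.Finite) (hC : Circuit M C) (hD : Cocircuit M D)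
    (hmem : C ∩ D = {x}) : False := by
  have hxC : x ∈ C := (hmem.symm ▸ (rfl : x ∈ ({x} : Set α)) : x ∈ C ∩ D).1
  have hxD : x ∈ D := (hmem.symm ▸ (rfl : x ∈ ({x} : Set α)) : x ∈ C ∩ D).2
  have hsub : C \ {x} ⊆ M.E \ D := by
    intro z hz
    refine ⟨hC.1 hz.1, fun hzD => hz.2 ?_⟩
    have : z ∈ C ∩ D := ⟨hz.1, hzD⟩
    rw [hmem] at this
    exact this
  have h1 : x ∈ M.closure (M.E \ D) :=
    M.closure_subset_closure hsub (hC.mem_closure_diff hxC)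
  exact cocircuit_not_mem_closure_compl hE hD hxD h1

lemma threeConn_contra {N : Matroid α} (hN : ThreeConnected N) (hX : X ⊆ N.E)
    (h0 : 0 ≤ lam N X) (h1 : lam N X ≤ 1) (hX2 : lam N X + 1 ≤ (X.ncard : ℤ))
    (hY2 : lam N X + 1 ≤ ((N.E \ X).ncard : ℤ)) : False := by
  have : lam N X = 0 ∨ lam N X = 1 := by omega
  rcases this with h | h
  · exact hN 1 one_pos (by norm_num) X hX ⟨by rw [h]; norm_num, by omega, by omega⟩
  · exact hN 2 two_pos (by norm_num) X hX ⟨by rw [h]; norm_num, by omega, by omega⟩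

section ThreeConnFacts

variable (hE : M.E.Finite) (hM : ThreeConnected M) (hE4 : 4 ≤ M.E.ncard)
include hE hM hE4

lemma r_singleton (hx : x ∈ M.E) : r M {x} = 1 := by
  have hle : r M {x} ≤ 1 := by
    have := r_le_ncard hE (singleton_subset_iff.mpr hx)
    simpa using this
  have h0 := r_nonneg M {x}
  by_contra hne
  have hr0 : r M {x} = 0 := by omega
  have hlam0 : lam M {x} ≤ 0 := by
    have : r M (M.E \ {x}) ≤ r M M.E := r_mono hE diff_subset
    unfold lam; omega
  refine threeConn_contra hM (singleton_subset_iff.mpr hx)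
    (lam_nonneg hE (singleton_subset_iff.mpr hx)) (by omega) ?_ ?_
  · have : lam M {x} = 0 := le_antisymm hlam0 (lam_nonneg hE (singleton_subset_iff.mpr hx))
    simp [this]
  · have hcard : (M.E \ {x}).ncard = M.E.ncard - 1 :=
      ncard_diff_singleton_of_mem hx
    have : lam M {x} = 0 := le_antisymm hlam0 (lam_nonneg hE (singleton_subset_iff.mpr hx))
    rw [this, hcard]
    have : 3 ≤ M.E.ncard - 1 := by omega
    exact_mod_cast by omega

lemma no_small_cocircuit (hD : Cocircuit M D) (hcard : D.ncard ≤ 2) : False := by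
  have hDE : D ⊆ M.E := hD.1
  have hDfin : D.Finite := hE.subset hDE
  have hne : D.Nonempty := by
    have := circuit_nonempty (M := M✶) hD
    exact this
  have hr : r M (M.E \ D) = r M M.E - 1 := cocircuit_compl_r hE hD
  have hlam : lam M D = r M D - 1 := by unfold lam; omega
  have h1 : r M D ≤ (D.ncard : ℤ) := r_le_ncard hE hDE
  have h0 : 0 ≤ lam M D := lam_nonneg hE hDE
  refine threeConn_contra hM hDE h0 (by omega) (by omega) ?_
  have hcompl : (M.E \ D).ncard = M.E.ncard - D.ncard :=
    ncard_diff hDE hDfin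
  have hDn : 1 ≤ D.ncard := ncard_pos hDfin |>.mpr hne
  have : 2 ≤ (M.E \ D).ncard := by omega
  omega

lemma pair_indep {y : α} (hx : x ∈ M.E) (hy : y ∈ M.E) (hxy : x ≠ y) :
    M.Indep {x, y} := by
  by_contra hdep
  obtain ⟨C, hCsub, hC⟩ := exists_circuit_of_dep hE
    (insert_subset hx (singleton_subset_iff.mpr hy)) hdep
  have hCfin : C.Finite := hE.subset hC.1
  have hCcard : C.ncard ≤ 2 := by
    have := ncard_le_ncard hCsub (toFinite _)
    rwa [ncard_pair hxy] at this
  have hCne := circuit_nonempty hC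
  have hrc := r_circuit hE hC
  -- C is a circuit with ≤ 2 elements; derive contradiction via hM
  rcases Nat.lt_or_ge C.ncard 2 with h2 | h2
  · -- singleton circuit: a loop z with r {z} = 0 but r_singleton says 1
    have h1 : C.ncard = 1 := by
      have := ncard_pos hCfin |>.mpr hCne
      omega
    obtain ⟨z, rfl⟩ := ncard_eq_one.mp h1
    have := r_singleton hE hM hE4 (hC.1 rfl)
    rw [hrc, h1] at this
    norm_num at this
  · have hCcard2 : C.ncard = 2 := le_antisymm hCcard h2
    have hlam : lam M C ≤ 1 := by
      have hmono : r M (M.E \ C) ≤ r M M.E := r_mono hE diff_subset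
      unfold lam
      rw [hrc, hCcard2]
      push_cast
      omega
    refine threeConn_contra hM hC.1 (lam_nonneg hE hC.1) hlam ?_ ?_
    · rw [hCcard2]; push_cast; omega
    · have hcompl : (M.E \ C).ncard = M.E.ncard - C.ncard := ncard_diff hC.1 hCfin
      rw [hcompl, hCcard2]
      have : 2 ≤ M.E.ncard - 2 := by omega
      push_cast
      omega

lemma r_pair {y : α} (hx : x ∈ M.E) (hy : y ∈ M.E) (hxy : x ≠ y) :
    r M {x, y} = 2 := by
  rw [r_indep hE (pair_indep hE hM hE4 hx hy hxy), ncard_pair hxy]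
  norm_num

lemma r_ground_diff_singleton (hx : x ∈ M.E) : r M (M.E \ {x}) = r M M.E := by
  have hle : r M (M.E \ {x}) ≤ r M M.E := r_mono hE diff_subset
  by_contra hne
  have hE' : M✶.E.Finite := by rwa [dual_ground]
  have hlt : r M (M.E \ {x}) < r M M.E := lt_of_le_of_ne hle hne
  have hdual : r M✶ {x} = 1 + r M (M.E \ {x}) - r M M.E := by
    have := r_dual (M := M) hE (singleton_subset_iff.mpr hx)
    simpa using this
  have hdep : ¬ M✶.Indep {x} := by
    intro hind
    have := r_indep hE' hind
    simp at this
    omega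
  obtain ⟨D, hDsub, hD⟩ := exists_circuit_of_dep hE'
    (by rw [dual_ground]; exact singleton_subset_iff.mpr hx) hdep
  have : D.ncard ≤ 1 := by
    have := ncard_le_ncard hDsub (toFinite _)
    simpa using this
  exact no_small_cocircuit hE hM hE4 hD (by omega)

lemma triad_of_r_dual_le (hZ : Z ⊆ M.E) (h3 : Z.ncard = 3) (hr : r M✶ Z ≤ 2) :
    Triad M Z := by
  have hE' : M✶.E.Finite := by rwa [dual_ground]
  have hZfin : Z.Finite := hE.subset hZ
  have hdep : ¬ M✶.Indep Z := by
    intro hind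
    have := r_indep hE' hind
    rw [h3] at this
    omega
  obtain ⟨D, hDsub, hD⟩ := exists_circuit_of_dep hE' (by rwa [dual_ground]) hdep
  have hDfin : D.Finite := hZfin.subset hDsub
  have hD3 : 3 ≤ D.ncard := by
    by_contra h
    exact no_small_cocircuit hE hM hE4 hD (by omega)
  have hDZ : D = Z := eq_of_subset_of_ncard_le hDsub (by omega) hZfin
  exact ⟨hDZ ▸ hD, h3⟩

end ThreeConnFacts

section Main

variable {P Q : Set α} {e f g h : α}

lemma sameCase
    (hE : M.E.Finite) (hE4 : 4 ≤ M.E.ncard) (hM : ThreeConnected M)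
    (hfconn : ThreeConnected (Con M {f}))
    (hPQ : Disjoint P Q) (hU : insert e (P ∪ Q) = M.E) (heP : e ∉ P) (heQ : e ∉ Q)
    (hlam : r M P + r M Q ≤ r M M.E + 1)
    (hQ3 : 3 ≤ Q.ncard)
    (hgP : g ∈ P) (hhP : h ∈ P) (hfQ : f ∈ Q)
    (hecl : e ∉ M.closure P)
    (hfcl : f ∈ M.closure {e, g, h}) : False := by
  have heE : e ∈ M.E := by rw [← hU]; exact mem_insert _ _
  have hPE : P ⊆ M.E := fun z hz => by rw [← hU]; exact mem_insert_of_mem _ (Or.inl hz)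
  have hQE : Q ⊆ M.E := fun z hz => by rw [← hU]; exact mem_insert_of_mem _ (Or.inr hz)
  have hfE : f ∈ M.E := hQE hfQ
  have hfe : f ≠ e := fun hc => heQ (hc ▸ hfQ)
  have hfP : f ∉ P := fun hc => (hPQ.ne_of_mem hc hfQ) rfl
  have hPfin : P.Finite := hE.subset hPE
  have hQfin : Q.Finite := hE.subset hQE
  set N := Con M {f} with hN
  have hNE : N.E = M.E \ {f} := rfl
  have hNEfin : N.E.Finite := by rw [hNE]; exact hE.diff
  have hsubN : insert e P ⊆ N.E := by
    rw [hNE]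
    intro z hz
    rcases hz with rfl | hz
    · exact ⟨heE, fun hc => hfe (mem_singleton_iff.mp hc).symm⟩
    · exact ⟨hPE hz, fun hc => hfP ((mem_singleton_iff.mp hc) ▸ hz)⟩
  have hrf : r M {f} = 1 := r_singleton hE hM hE4 hfE
  -- complement identity
  have hid : N.E \ insert e P = Q \ {f} := by
    rw [hNE]
    ext z
    simp only [mem_diff, mem_insert_iff, mem_singleton_iff, not_or]
    constructor
    · rintro ⟨⟨hzE, hzf⟩, hze, hzP⟩
      rw [← hU] at hzE
      rcases hzE with rfl | hz
      · exact absurd rfl hze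
      · rcases hz with hz | hz
        · exact absurd hz hzP
        · exact ⟨hz, hzf⟩
    · rintro ⟨hzQ, hzf⟩
      exact ⟨⟨hQE hzQ, hzf⟩, fun hc => heQ (hc ▸ hzQ), fun hc => (hPQ.ne_of_mem hc hzQ) rfl⟩
  -- ranks in N
  have hr1 : r N (insert e P) = r M P := by
    rw [hN, r_con hE hfE (by rw [← hNE]; exact hsubN)]
    have hf1 : f ∈ M.closure (insert e P) := by
      refine M.closure_subset_closure ?_ hfcl
      exact insert_subset (mem_insert _ _)
        (insert_subset (mem_insert_of_mem _ hgP) (singleton_subset_iff.mpr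
          (mem_insert_of_mem _ hhP)))
    rw [r_insert_of_mem_closure hE (insert_subset heE hPE) hf1,
      r_insert_of_not_mem_closure hE hPE heE hecl, hrf]
    ring
  have hr2 : r N (Q \ {f}) = r M Q - 1 := by
    rw [hN, r_con hE hfE (fun z hz => ⟨hQE hz.1, hz.2⟩)]
    rw [insert_diff_singleton, insert_eq_of_mem hfQ, hrf]
  have hr3 : r N N.E = r M M.E - 1 := by
    rw [hN, hNE, r_con hE hfE (Subset.refl _)]
    rw [insert_diff_singleton, insert_eq_of_mem hfE, hrf]
  have hlamN : lam N (insert e P) = r M P + r M Q - r M M.E := by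
    unfold lam
    rw [hid, hr1, hr2, hr3]
    ring
  have hlamle : lam N (insert e P) ≤ 1 := by omega
  have hlamge : 0 ≤ lam N (insert e P) := lam_nonneg hNEfin hsubN
  have hc1 : (insert e P).ncard = P.ncard + 1 := ncard_insert_of_notMem heP hPfin
  have hc2 : (Q \ {f}).ncard = Q.ncard - 1 := ncard_diff_singleton_of_mem hfQ
  have hPne : 1 ≤ P.ncard := (ncard_pos hPfin).mpr ⟨g, hgP⟩
  refine threeConn_contra hfconn hsubN hlamge hlamle ?_ ?_
  · rw [hc1]; push_cast; omega
  · rw [hid, hc2]; push_cast; omega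

lemma moveCase {A B T : Set α} {a b : α}
    (hE : M.E.Finite) (hE4 : 4 ≤ M.E.ncard) (hM : ThreeConnected M)
    (hfconn : ThreeConnected (Con M {f}))
    (he : ∀ T', Triad M T' → e ∉ T')
    (hAB : Disjoint A B) (hU : insert e (A ∪ B) = M.E) (heA : e ∉ A) (heB : e ∉ B)
    (hlam : r M A + r M B = r M M.E + 1)
    (hA3 : 3 ≤ A.ncard) (hB3 : 3 ≤ B.ncard)
    (heclA : e ∉ M.closure A) (heclB : e ∉ M.closure B)
    (haA : a ∈ A) (hbB : b ∈ B)
    (hT : Cocircuit M T) (haT : a ∈ T) (hTB : T ⊆ insert a B)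
    (hecl : e ∈ M.closure {f, a, b}) (hfcl : f ∈ M.closure {e, a, b})
    (hfa : f ≠ a) (hfb : f ≠ b) (hfe : f ≠ e) : False := by
  have heE : e ∈ M.E := by rw [← hU]; exact mem_insert _ _
  have hAE : A ⊆ M.E := fun z hz => by rw [← hU]; exact mem_insert_of_mem _ (Or.inl hz)
  have hBE : B ⊆ M.E := fun z hz => by rw [← hU]; exact mem_insert_of_mem _ (Or.inr hz)
  have hAfin : A.Finite := hE.subset hAE
  have hBfin : B.Finite := hE.subset hBE
  have haE : a ∈ M.E := hAE haA
  have hbE : b ∈ M.E := hBE hbB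
  have hae : a ≠ e := fun hc => heA (hc ▸ haA)
  have hbe : b ≠ e := fun hc => heB (hc ▸ hbB)
  have haB : a ∉ B := fun hc => (hAB.ne_of_mem haA hc) rfl
  have hfE : f ∈ M.E := M.mem_ground_of_mem_closure hfcl
  -- a is not in the closure of A \ {a}
  have hAaT : A \ {a} ⊆ M.E \ T := by
    intro z hz
    refine ⟨hAE hz.1, fun hzT => ?_⟩
    rcases hTB hzT with rfl | hzB
    · exact hz.2 rfl
    · exact (hAB.ne_of_mem hz.1 hzB) rfl
  have hacl : a ∉ M.closure (A \ {a}) := fun hc =>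
    cocircuit_not_mem_closure_compl hE hT haT
      (M.closure_subset_closure hAaT hc)
  have hrAa : r M (A \ {a}) = r M A - 1 := by
    have := r_insert_of_not_mem_closure hE (diff_subset.trans hAE) haE hacl
    rw [insert_diff_singleton, insert_eq_of_mem haA] at this
    omega
  -- the complement identity for insert e (insert a B)
  have hidB : M.E \ insert e (insert a B) = A \ {a} := by
    ext z
    simp only [mem_diff, mem_insert_iff, mem_singleton_iff, not_or]
    constructor
    · rintro ⟨hzE, hze, hza, hzB⟩
      rw [← hU] at hzE
      rcases hzE with rfl | hz
      · exact absurd rfl hze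
      · rcases hz with hz | hz
        · exact ⟨hz, hza⟩
        · exact absurd hz hzB
    · rintro ⟨hzA, hza⟩
      exact ⟨hAE hzA, fun hc => heA (hc ▸ hzA), hza,
        fun hc => (hAB.ne_of_mem hzA hc) rfl⟩
  have hsubB : insert e (insert a B) ⊆ M.E :=
    insert_subset heE (insert_subset haE hBE)
  have hcardB : (insert e (insert a B)).ncard = B.ncard + 2 := by
    rw [ncard_insert_of_notMem (by
        rintro (rfl | hc)
        · exact hae rfl
        · exact heB hc) ((hBfin.insert a)),
      ncard_insert_of_notMem haB hBfin]
  have hcardAa : (A \ {a}).ncard = A.ncard - 1 := ncard_diff_singleton_of_mem haA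
  -- the general contradiction when r (insert e (insert a B)) ≤ r B + 1
  have hMcontra : r M (insert e (insert a B)) ≤ r M B + 1 → False := by
    intro hble
    have hlamZ : lam M (insert e (insert a B)) ≤ 1 := by
      unfold lam
      rw [hidB, hrAa]
      omega
    refine threeConn_contra hM hsubB (lam_nonneg hE hsubB) hlamZ ?_ ?_
    · rw [hcardB]; push_cast; omega
    · rw [hidB, hcardAa]; push_cast; omega
  by_cases hfB : f ∈ B
  · -- f on the B side : e ∈ closure of insert a B
    refine hMcontra ?_
    have he2 : e ∈ M.closure (insert a B) := by
      refine M.closure_subset_closure ?_ hecl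
      exact insert_subset (mem_insert_of_mem _ hfB)
        (insert_subset (mem_insert _ _) (singleton_subset_iff.mpr (mem_insert_of_mem _ hbB)))
    rw [r_insert_of_mem_closure hE (insert_subset haE hBE) he2]
    exact r_insert_le hE a B
  -- f must be in A
  have hfA : f ∈ A := by
    have hfEU : f ∈ insert e (A ∪ B) := by rw [hU]; exact hfE
    rcases hfEU with rfl | hf'
    · exact absurd rfl hfe
    · rcases hf' with hf' | hf'
      · exact hf'
      · exact absurd hf' hfB
  by_cases hble : r M (insert e (insert a B)) ≤ r M B + 1
  · exact hMcontra hble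
  push_neg at hble
  have hup1 : r M (insert e (insert a B)) ≤ r M (insert a B) + 1 := r_insert_le hE _ _
  have hup2 : r M (insert a B) ≤ r M B + 1 := r_insert_le hE _ _
  have hraB : r M (insert a B) = r M B + 1 := by omega
  have hreaB : r M (insert e (insert a B)) = r M (insert a B) + 1 := by omega
  have heclaB : e ∉ M.closure (insert a B) :=
    not_mem_closure_of_r hE (insert_subset haE hBE) (by omega)
  by_cases hA4 : 4 ≤ A.ncard
  · -- apply sameCase with P = insert a B, Q = A \ {a}
    refine sameCase (P := insert a B) (Q := A \ {a}) (g := a) (h := b)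
      hE hE4 hM hfconn ?_ ?_ ?_ ?_ ?_ ?_
      (mem_insert _ _) (mem_insert_of_mem _ hbB)
      (show f ∈ A \ {a} from ⟨hfA, hfa⟩) heclaB hfcl
    · rw [disjoint_comm]
      refine disjoint_left.mpr ?_
      rintro z ⟨hzA, hza⟩ (rfl | hzB)
      · exact hza rfl
      · exact (hAB.ne_of_mem hzA hzB) rfl
    · rw [← hU]
      congr 1
      ext z
      simp only [mem_union, mem_insert_iff, mem_diff, mem_singleton_iff]
      constructor
      · rintro ((rfl | hz) | ⟨hz, _⟩)
        · exact Or.inl haA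
        · exact Or.inr hz
        · exact Or.inl hz
      · rintro (hz | hz)
        · by_cases hza : z = a
          · exact Or.inl (Or.inl hza)
          · exact Or.inr ⟨hz, hza⟩
        · exact Or.inl (Or.inr hz)
    · rintro (rfl | hc)
      · exact hae rfl
      · exact heB hc
    · exact fun hc => heA hc.1
    · rw [hraB, hrAa]; omega
    · rw [hcardAa]; omega
  -- the |A| = 3 case
  have hA3' : A.ncard = 3 := by omega
  have hfaA : ({f, a} : Set α) ⊆ A := insert_subset hfA (singleton_subset_iff.mpr haA)
  have hAd : (A \ {f, a}).ncard = 1 := by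
    rw [ncard_diff hfaA (toFinite _), ncard_pair hfa, hA3']
  obtain ⟨x, hx⟩ := ncard_eq_one.mp hAd
  have hxA : x ∈ A := by
    have : x ∈ A \ {f, a} := hx ▸ rfl
    exact this.1
  have hxfa : x ≠ f ∧ x ≠ a := by
    have : x ∈ A \ {f, a} := hx ▸ rfl
    simp only [mem_diff, mem_insert_iff, mem_singleton_iff, not_or] at this
    exact this.2
  have hxE : x ∈ M.E := hAE hxA
  have hAeq : A = {f, a, x} := by
    ext z
    simp only [mem_insert_iff, mem_singleton_iff]
    constructor
    · intro hz
      by_cases hzf : z = f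
      · exact Or.inl hzf
      by_cases hza : z = a
      · exact Or.inr (Or.inl hza)
      have : z ∈ A \ {f, a} := ⟨hz, by simp [hzf, hza]⟩
      rw [hx] at this
      exact Or.inr (Or.inr this)
    · rintro (rfl | rfl | rfl)
      · exact hfA
      · exact haA
      · exact hxA
  have hAaeq : A \ {a} = {f, x} := by
    rw [hAeq]
    ext z
    simp only [mem_diff, mem_insert_iff, mem_singleton_iff]
    constructor
    · rintro ⟨(rfl | rfl | rfl), hza⟩
      · exact Or.inl rfl
      · exact absurd rfl hza
      · exact Or.inr rfl
    · rintro (rfl | rfl)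
      · exact ⟨Or.inl rfl, fun hc => hfa hc⟩
      · exact ⟨Or.inr (Or.inr rfl), fun hc => hxfa.2 hc⟩
  have hrfx : r M ({f, x} : Set α) = 2 :=
    r_pair hE hM hE4 hfE hxE (fun hc => hxfa.1 hc.symm)
  have hrA : r M A = 3 := by
    rw [hAaeq, hrfx] at hrAa
    omega
  have hrB : r M B = r M M.E - 2 := by omega
  -- consider Z = {e, f, a}
  set Z : Set α := {e, f, a} with hZ
  have hZE : Z ⊆ M.E := insert_subset heE (insert_subset hfE (singleton_subset_iff.mpr haE))
  have hZcard : Z.ncard = 3 := by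
    rw [hZ]
    rw [ncard_insert_of_notMem (by
        rintro (rfl | rfl)
        · exact hfe rfl
        · exact hae rfl) (toFinite _),
      ncard_pair hfa]
  have hidZ : M.E \ Z = insert x B := by
    ext z
    simp only [mem_diff, mem_insert_iff, mem_singleton_iff, not_or, hZ]
    constructor
    · rintro ⟨hzE, hze, hzf, hza⟩
      rw [← hU] at hzE
      rcases hzE with rfl | hz
      · exact absurd rfl hze
      · rcases hz with hz | hz
        · rw [hAeq] at hz
          rcases hz with rfl | rfl | rfl
          · exact absurd rfl hzf
          · exact absurd rfl hza
          · exact Or.inl rfl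
        · exact Or.inr hz
    · rintro (rfl | hzB)
      · exact ⟨hxE, fun hc => heA (hc ▸ hxA), hxfa.1, hxfa.2⟩
      · refine ⟨hBE hzB, fun hc => heB (hc ▸ hzB), fun hc => hfB (hc ▸ hzB),
          fun hc => haB (hc ▸ hzB)⟩
  have hrxB : r M (insert x B) ≤ r M M.E - 1 := by
    have := r_insert_le hE x B
    omega
  by_cases hsum : r M Z + r M (insert x B) ≤ r M M.E + 1
  · -- contradiction with hM
    have hlamZ : lam M Z ≤ 1 := by
      unfold lam
      rw [hidZ]
      omega
    refine threeConn_contra hM hZE (lam_nonneg hE hZE) hlamZ ?_ ?_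
    · rw [hZcard]; push_cast; omega
    · rw [hidZ, ncard_insert_of_notMem (fun hc => (hAB.ne_of_mem hxA hc) rfl) hBfin]
      push_cast
      omega
  push_neg at hsum
  have hrZ3 : r M Z = 3 ∧ r M (insert x B) = r M M.E - 1 := by
    have h1 : r M Z ≤ 3 := by
      have := r_le_ncard hE hZE
      rw [hZcard] at this
      exact_mod_cast this
    constructor <;> omega
  have hrdualZ : r M✶ Z ≤ 2 := by
    rw [r_dual hE hZE, hZcard, hidZ]
    push_cast
    omega
  exact he Z (triad_of_r_dual_le hE hM hE4 hZE hZcard hrdualZ) (mem_insert _ _)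

end Main

lemma ncard_le_three (x y z : α) : ({x, y, z} : Set α).ncard ≤ 3 := by
  have h1 := Set.ncard_insert_le x ({y, z} : Set α)
  have h2 := Set.ncard_insert_le y ({z} : Set α)
  have h3 : ({z} : Set α).ncard = 1 := ncard_singleton z
  omega

lemma four_distinct {a b c d : α} (hcard : ({a, b, c, d} : Set α).ncard = 4) :
    a ≠ b ∧ a ≠ c ∧ a ≠ d ∧ b ≠ c ∧ b ≠ d ∧ c ≠ d := by
  refine ⟨?_, ?_, ?_, ?_, ?_, ?_⟩ <;> rintro rfl
  · have hsub : ({a, a, c, d} : Set α) ⊆ {a, c, d} := by intro z hz; simp at hz ⊢; tauto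
    have := (ncard_le_ncard hsub (toFinite _)).trans (ncard_le_three a c d)
    omega
  · have hsub : ({a, b, a, d} : Set α) ⊆ {a, b, d} := by intro z hz; simp at hz ⊢; tauto
    have := (ncard_le_ncard hsub (toFinite _)).trans (ncard_le_three a b d)
    omega
  · have hsub : ({a, b, c, a} : Set α) ⊆ {a, b, c} := by intro z hz; simp at hz ⊢; tauto
    have := (ncard_le_ncard hsub (toFinite _)).trans (ncard_le_three a b c)
    omega
  · have hsub : ({a, b, b, d} : Set α) ⊆ {a, b, d} := by intro z hz; simp at hz ⊢; tauto
    have := (ncard_le_ncard hsub (toFinite _)).trans (ncard_le_three a b d)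
    omega
  · have hsub : ({a, b, c, b} : Set α) ⊆ {a, b, c} := by intro z hz; simp at hz ⊢; tauto
    have := (ncard_le_ncard hsub (toFinite _)).trans (ncard_le_three a b c)
    omega
  · have hsub : ({a, b, c, c} : Set α) ⊆ {a, b, c} := by intro z hz; simp at hz ⊢; tauto
    have := (ncard_le_ncard hsub (toFinite _)).trans (ncard_le_three a b c)
    omega


/-- If `{e,f,g,h}` is a 4-element circuit with `{g,h}` in a triad, `e` is in no
triad, and `M / f` is 3-connected, then `M \ e` is 3-connected. -/
theorem stmt11 (M : Matroid α) [M.Finite] (hM : ThreeConnected M)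
    {e f g h : α} (hC : Circuit M {e, f, g, h})
    (hcard : ({e, f, g, h} : Set α).ncard = 4)
    (hgh : ∃ T, Triad M T ∧ {g, h} ⊆ T)
    (he : ∀ T, Triad M T → e ∉ T)
    (hf : ThreeConnected (Con M {f})) :
    ThreeConnected (Del M {e}) := by
  classical
  have hE : M.E.Finite := M.ground_finite
  have hE' : M✶.E.Finite := by rwa [dual_ground]
  obtain ⟨d_ef, d_eg, d_eh, d_fg, d_fh, d_gh⟩ := four_distinct hcard
  have hCE : ({e, f, g, h} : Set α) ⊆ M.E := hC.1
  have heE : e ∈ M.E := hCE (by simp)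
  have hfE : f ∈ M.E := hCE (by simp)
  have hgE : g ∈ M.E := hCE (by simp)
  have hhE : h ∈ M.E := hCE (by simp)
  have hE4 : 4 ≤ M.E.ncard := by
    have := ncard_le_ncard hCE hE
    omega
  obtain ⟨T, hT, hghT⟩ := hgh
  have hte : e ∉ T := he T hT
  have hTE : T ⊆ M.E := by have := hT.1.1; rwa [dual_ground] at this
  have h1 : (T \ {g, h}).ncard = 1 := by
    rw [ncard_diff hghT (toFinite _), ncard_pair d_gh, hT.2]
  obtain ⟨t, ht⟩ := ncard_eq_one.mp h1
  have htT : t ∈ T := by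
    have : t ∈ T \ {g, h} := ht ▸ rfl
    exact this.1
  have htgh : t ∉ ({g, h} : Set α) := by
    have : t ∈ T \ {g, h} := ht ▸ rfl
    exact this.2
  have hTeq : T = {t, g, h} := by
    have h2 : (T \ {g, h}) ∪ {g, h} = T := diff_union_of_subset hghT
    rw [ht] at h2
    rw [← h2, singleton_union]
  have hte' : t ≠ e := fun hc => hte (hc ▸ htT)
  have htE : t ∈ M.E := hTE htT
  -- closure facts from the circuit
  have hecl : e ∈ M.closure {f, g, h} := by
    have h2 := hC.mem_closure_diff (x := e) (by simp)
    have hid : ({e, f, g, h} : Set α) \ {e} = {f, g, h} := by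
      ext z
      simp only [mem_diff, mem_insert_iff, mem_singleton_iff]
      constructor
      · rintro ⟨(rfl | hz), hze⟩
        · exact absurd rfl hze
        · exact hz
      · rintro hz
        refine ⟨Or.inr hz, ?_⟩
        rintro rfl
        rcases hz with rfl | rfl | rfl
        · exact d_ef rfl
        · exact d_eg rfl
        · exact d_eh rfl
    rwa [hid] at h2
  have hfcl : f ∈ M.closure {e, g, h} := by
    have h2 := hC.mem_closure_diff (x := f) (by simp)
    have hid : ({e, f, g, h} : Set α) \ {f} = {e, g, h} := by
      ext z
      simp only [mem_diff, mem_insert_iff, mem_singleton_iff]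
      constructor
      · rintro ⟨(rfl | rfl | hz), hzf⟩
        · exact Or.inl rfl
        · exact absurd rfl hzf
        · exact Or.inr hz
      · rintro hz
        refine ⟨?_, ?_⟩
        · rcases hz with rfl | hz
          · exact Or.inl rfl
          · exact Or.inr (Or.inr hz)
        · rintro rfl
          rcases hz with rfl | rfl | rfl
          · exact d_ef rfl
          · exact d_fg rfl
          · exact d_fh rfl
    rwa [hid] at h2
  -- begin main argument
  intro k hk0 hk3 X hXsub
  rintro ⟨hlamX, hkX, hkY⟩
  have hXE' : X ⊆ M.E \ {e} := hXsub
  set Y := (M.E \ {e}) \ X with hY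
  have hXE : X ⊆ M.E := hXE'.trans diff_subset
  have hYE' : Y ⊆ M.E \ {e} := diff_subset
  have hYE : Y ⊆ M.E := hYE'.trans diff_subset
  have hXfin : X.Finite := hE.subset hXE
  have hYfin : Y.Finite := hE.subset hYE
  have heX : e ∉ X := fun hc => (hXE' hc).2 rfl
  have heY : e ∉ Y := fun hc => (hYE' hc).2 rfl
  have hdisjXY : Disjoint X Y := disjoint_sdiff_self_right
  have hrEe : r M (M.E \ {e}) = r M M.E := r_ground_diff_singleton hE hM hE4 heE
  have hlam' : lam (Del M {e}) X = r M X + r M Y - r M M.E := by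
    show r (M ↾ (M.E \ {e})) X + r (M ↾ (M.E \ {e})) ((M.E \ {e}) \ X)
      - r (M ↾ (M.E \ {e})) (M.E \ {e}) = _
    rw [r_restrict hXE', r_restrict diff_subset, r_restrict (Subset.refl _), hrEe, ← hY]
  have hkY' : (k : ℤ) ≤ (Y.ncard : ℤ) := hkY
  have hU : insert e (X ∪ Y) = M.E := by
    ext z
    simp only [mem_insert_iff, mem_union]
    constructor
    · rintro (rfl | hz | hz)
      · exact heE
      · exact hXE hz
      · exact hYE hz
    · intro hz
      by_cases hze : z = e
      · exact Or.inl hze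
      · by_cases hzX : z ∈ X
        · exact Or.inr (Or.inl hzX)
        · exact Or.inr (Or.inr ⟨⟨hz, hze⟩, hzX⟩)
  have hcomplX : M.E \ insert e X = Y := by
    rw [hY, diff_diff, ← insert_eq]
  have hcomplX' : M.E \ X = insert e Y := by
    ext z
    simp only [mem_diff, mem_insert_iff]
    constructor
    · rintro ⟨hzE, hzX⟩
      by_cases hze : z = e
      · exact Or.inl hze
      · exact Or.inr ⟨⟨hzE, hze⟩, hzX⟩
    · rintro (rfl | hz)
      · exact ⟨heE, heX⟩
      · exact ⟨hYE hz, hz.2⟩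
  have hcomplY : M.E \ insert e Y = X := by
    ext z
    simp only [mem_diff, mem_insert_iff]
    constructor
    · rintro ⟨hzE, hz⟩
      push_neg at hz
      obtain ⟨hze, hzY⟩ := hz
      by_cases hzX : z ∈ X
      · exact hzX
      · exact absurd ⟨⟨hzE, hze⟩, hzX⟩ hzY
    · intro hz
      refine ⟨hXE hz, ?_⟩
      rintro (rfl | hzY)
      · exact heX hz
      · exact (hdisjXY.ne_of_mem hz hzY) rfl
  interval_cases k
  · -- k = 1
    have hlam0 : r M X + r M Y = r M M.E := by
      rw [hlam'] at hlamX
      omega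
    have hX1 : 1 ≤ X.ncard := by exact_mod_cast hkX
    have hY1 : 1 ≤ Y.ncard := by exact_mod_cast hkY'
    have hlamM : lam M X ≤ 1 := by
      unfold lam
      rw [hcomplX']
      have := r_insert_le hE e Y
      omega
    have h0 : 0 ≤ lam M X := lam_nonneg hE hXE
    by_cases hX2 : 2 ≤ X.ncard
    · refine threeConn_contra hM hXE h0 hlamM (by push_cast; omega) ?_
      rw [hcomplX', ncard_insert_of_notMem heY hYfin]
      push_cast
      omega
    · have hX1' : X.ncard = 1 := by omega
      obtain ⟨x, rfl⟩ := ncard_eq_one.mp hX1'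
      have hxE : x ∈ M.E := hXE rfl
      have hrx : r M {x} = 1 := r_singleton hE hM hE4 hxE
      have hrY : r M Y = r M M.E - 1 := by omega
      have hxe : x ≠ e := by
        have := (hXE' rfl).2
        simpa using this
      have hsubex : ({e, x} : Set α) ⊆ M.E :=
        insert_subset heE (singleton_subset_iff.mpr hxE)
      have hidex : M.E \ {e, x} = Y := hcomplX
      have hdual : r M✶ {e, x} = 1 := by
        rw [r_dual hE hsubex, hidex, ncard_pair (fun hc => hxe hc.symm)]
        push_cast
        omega
      have hdep : ¬ M✶.Indep {e, x} := by
        intro hind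
        have := r_indep hE' hind
        rw [ncard_pair (fun hc => hxe hc.symm)] at this
        omega
      obtain ⟨D, hDsub, hD⟩ := exists_circuit_of_dep hE'
        (by rw [dual_ground]; exact hsubex) hdep
      refine no_small_cocircuit hE hM hE4 hD ?_
      have := ncard_le_ncard hDsub (toFinite _)
      rw [ncard_pair (fun hc => hxe hc.symm)] at this
      omega
  · -- k = 2
    have hr1 : r M X + r M Y = r M M.E + 1 := by
      rw [hlam'] at hlamX
      omega
    have hX2 : 2 ≤ X.ncard := by exact_mod_cast hkX
    have hY2 : 2 ≤ Y.ncard := by exact_mod_cast hkY'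
    have heclX : e ∉ M.closure X := by
      intro hmem
      have hlamM : lam M (insert e X) ≤ 1 := by
        unfold lam
        rw [hcomplX, r_insert_of_mem_closure hE hXE hmem]
        omega
      refine threeConn_contra hM (insert_subset heE hXE)
        (lam_nonneg hE (insert_subset heE hXE)) hlamM ?_ ?_
      · rw [ncard_insert_of_notMem heX hXfin]; push_cast; omega
      · rw [hcomplX]; push_cast; omega
    have heclY : e ∉ M.closure Y := by
      intro hmem
      have hlamM : lam M (insert e Y) ≤ 1 := by
        unfold lam
        rw [hcomplY, r_insert_of_mem_closure hE hYE hmem]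
        omega
      refine threeConn_contra hM (insert_subset heE hYE)
        (lam_nonneg hE (insert_subset heE hYE)) hlamM ?_ ?_
      · rw [ncard_insert_of_notMem heY hYfin]; push_cast; omega
      · rw [hcomplY]; push_cast; omega
    -- both sides have at least 3 elements
    have hbig : ∀ W Z : Set α, W ⊆ M.E → Z ⊆ M.E → e ∉ W → e ∉ Z →
        r M W + r M Z = r M M.E + 1 → 2 ≤ Z.ncard → M.E \ insert e W = Z →
        W.ncard = 2 → False := by
      intro W Z hWE hZE heW heZ hrWZ hZ2 hcompl hW2
      obtain ⟨x, y, hxy, rfl⟩ := ncard_eq_two.mp hW2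
      have hxE : x ∈ M.E := hWE (by simp)
      have hyE : y ∈ M.E := hWE (by simp)
      have hrW : r M {x, y} = 2 := r_pair hE hM hE4 hxE hyE hxy
      have hrZ : r M Z = r M M.E - 1 := by omega
      have hZs : insert e {x, y} ⊆ M.E := insert_subset heE hWE
      have hZc : ((insert e {x, y} : Set α)).ncard = 3 := by
        rw [ncard_insert_of_notMem heW (toFinite _), ncard_pair hxy]
      have hrd : r M✶ (insert e {x, y}) ≤ 2 := by
        rw [r_dual hE hZs, hcompl, hZc]
        push_cast
        omega
      exact he _ (triad_of_r_dual_le hE hM hE4 hZs hZc hrd) (mem_insert _ _)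
    have hX3 : 3 ≤ X.ncard := by
      by_contra h'
      exact hbig X Y hXE hYE heX heY hr1 hY2 hcomplX (by omega)
    have hY3 : 3 ≤ Y.ncard := by
      by_contra h'
      exact hbig Y X hYE hXE heY heX (by omega) hX2 hcomplY (by omega)
    -- determine sides
    have hside : ∀ z, z ∈ M.E → z ≠ e → z ∈ X ∨ z ∈ Y := by
      intro z hz hze
      rw [← hU] at hz
      rcases hz with rfl | hz | hz
      · exact absurd rfl hze
      · exact Or.inl hz
      · exact Or.inr hz
    have hU' : insert e (Y ∪ X) = M.E := by rw [union_comm]; exact hU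
    have hfe : f ≠ e := fun hc => d_ef hc.symm
    rcases hside g hgE (fun hc => d_eg hc.symm) with hgX | hgY <;>
      rcases hside h hhE (fun hc => d_eh hc.symm) with hhX | hhY
    · -- g, h ∈ X
      have hfY : f ∈ Y := by
        rcases hside f hfE hfe with hfX | hfY
        · exact absurd (M.closure_subset_closure
            (insert_subset hfX (insert_subset hgX (singleton_subset_iff.mpr hhX)))
            hecl) heclX
        · exact hfY
      exact sameCase hE hE4 hM hf hdisjXY hU heX heY (by omega) hY3 hgX hhX hfY heclX hfcl
    · -- g ∈ X, h ∈ Y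
      rcases hside t htE hte' with htX | htY
      · -- t ∈ X : move h into X, i.e. A := Y, B := X, a := h, b := g
        have hperm1 : ({f, h, g} : Set α) = {f, g, h} := by rw [pair_comm h g]
        have hperm2 : ({e, h, g} : Set α) = {e, g, h} := by rw [pair_comm h g]
        refine moveCase (A := Y) (B := X) (T := T) (a := h) (b := g)
          hE hE4 hM hf he hdisjXY.symm hU' heY heX (by omega) hY3 hX3 heclY heclX
          hhY hgX hT.1 (by rw [hTeq]; simp) ?_ (by rw [hperm1]; exact hecl)
          (by rw [hperm2]; exact hfcl) d_fh d_fg hfe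
        rw [hTeq]
        exact insert_subset (mem_insert_of_mem _ htX)
          (insert_subset (mem_insert_of_mem _ hgX)
            (singleton_subset_iff.mpr (mem_insert _ _)))
      · -- t ∈ Y : move g into Y, A := X, B := Y, a := g, b := h
        refine moveCase (A := X) (B := Y) (T := T) (a := g) (b := h)
          hE hE4 hM hf he hdisjXY hU heX heY hr1 hX3 hY3 heclX heclY
          hgX hhY hT.1 (by rw [hTeq]; simp) ?_ hecl hfcl d_fg d_fh hfe
        rw [hTeq]
        exact insert_subset (mem_insert_of_mem _ htY)
          (insert_subset (mem_insert _ _)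
            (singleton_subset_iff.mpr (mem_insert_of_mem _ hhY)))
    · -- g ∈ Y, h ∈ X
      rcases hside t htE hte' with htX | htY
      · -- t ∈ X : move g into X, A := Y, B := X, a := g, b := h
        refine moveCase (A := Y) (B := X) (T := T) (a := g) (b := h)
          hE hE4 hM hf he hdisjXY.symm hU' heY heX (by omega) hY3 hX3 heclY heclX
          hgY hhX hT.1 (by rw [hTeq]; simp) ?_ hecl hfcl d_fg d_fh hfe
        rw [hTeq]
        exact insert_subset (mem_insert_of_mem _ htX)
          (insert_subset (mem_insert _ _)
            (singleton_subset_iff.mpr (mem_insert_of_mem _ hhX)))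
      · -- t ∈ Y : move h into Y, A := X, B := Y, a := h, b := g
        have hperm1 : ({f, h, g} : Set α) = {f, g, h} := by rw [pair_comm h g]
        have hperm2 : ({e, h, g} : Set α) = {e, g, h} := by rw [pair_comm h g]
        refine moveCase (A := X) (B := Y) (T := T) (a := h) (b := g)
          hE hE4 hM hf he hdisjXY hU heX heY hr1 hX3 hY3 heclX heclY
          hhX hgY hT.1 (by rw [hTeq]; simp) ?_ (by rw [hperm1]; exact hecl)
          (by rw [hperm2]; exact hfcl) d_fh d_fg hfe
        rw [hTeq]
        exact insert_subset (mem_insert_of_mem _ htY)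
          (insert_subset (mem_insert_of_mem _ hgY)
            (singleton_subset_iff.mpr (mem_insert _ _)))
    · -- g, h ∈ Y
      have hfX : f ∈ X := by
        rcases hside f hfE hfe with hfX | hfY
        · exact hfX
        · exact absurd (M.closure_subset_closure
            (insert_subset hfY (insert_subset hgY (singleton_subset_iff.mpr hhY)))
            hecl) heclY
      exact sameCase hE hE4 hM hf hdisjXY.symm hU' heY heX (by omega) hX3 hgY hhY hfX
        heclY hfcl
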